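/- The agent-alternating formula ◇_a □_b □_a p → p (for distinct agents a, b) is a theorem of the modal logic B = KTB but is not a theorem of S4. In particular B|_alt is not contained in S4|_alt. -/

import Mathlib

/-- Formulas of the multi-agent modal language: p | ¬φ | (φ ∧ φ) | □_a φ. -/
inductive Fm (A : Type) : Type
  | atom : ℕ → Fm A
  | neg : Fm A → Fm A
  | and : Fm A → Fm A → Fm A
  | box : A → Fm A → Fm A

namespace Fm
def imp {A : Type} (φ ψ : Fm A) : Fm A := .neg (.and φ (.neg ψ))
def or {A : Type} (φ ψ : Fm A) : Fm A := .neg (.and (.neg φ) (.neg ψ))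
def dia {A : Type} (a : A) (φ : Fm A) : Fm A := .neg (.box a (.neg φ))
end Fm

/-- Kripke models with agent set `A` and world type `W`. -/
structure Kripke (A W : Type) where
  R : A → W → W → Prop
  V : ℕ → W → Prop

/-- Satisfaction. -/
def Sat {A W : Type} (M : Kripke A W) : W → Fm A → Prop
  | w, .atom n => M.V n w
  | w, .neg φ => ¬ Sat M w φ
  | w, .and φ ψ => Sat M w φ ∧ Sat M w ψ
  | w, .box a φ => ∀ v, M.R a w v → Sat M v φ

/-- The fragments L_{-a}: φ ::= p | □_x ψ (x ≠ a, ψ ∈ L_{-x}) | ¬φ | (φ ∧ φ). -/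
inductive LMinus {A : Type} : A → Fm A → Prop
  | atom (a : A) (n : ℕ) : LMinus a (.atom n)
  | box {a x : A} {ψ : Fm A} : x ≠ a → LMinus x ψ → LMinus a (.box x ψ)
  | neg {a : A} {φ : Fm A} : LMinus a φ → LMinus a (.neg φ)
  | and {a : A} {φ ψ : Fm A} : LMinus a φ → LMinus a ψ → LMinus a (.and φ ψ)

/-- The agent-alternating fragment L_alt. -/
inductive LAlt {A : Type} : Fm A → Prop
  | atom (n : ℕ) : LAlt (.atom n)
  | chi {φ : Fm A} (a : A) : LMinus a φ → LAlt φ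
  | neg {φ : Fm A} : LAlt φ → LAlt (.neg φ)
  | and {φ ψ : Fm A} : LAlt φ → LAlt ψ → LAlt (.and φ ψ)

/-- The fragments L_X for X ⊆ A: φ ::= p | □_x ψ (x ∈ X, ψ ∈ L_{X\{x}}) | ¬φ | (φ ∧ φ). -/
inductive LX {A : Type} : Set A → Fm A → Prop
  | atom (X : Set A) (n : ℕ) : LX X (.atom n)
  | box {X : Set A} {x : A} {ψ : Fm A} : x ∈ X → LX (X \ {x}) ψ → LX X (.box x ψ)
  | neg {X : Set A} {φ : Fm A} : LX X φ → LX X (.neg φ)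
  | and {X : Set A} {φ ψ : Fm A} : LX X φ → LX X ψ → LX X (.and φ ψ)

/-- Immediate subformula relation. -/
inductive ISub {A : Type} : Fm A → Fm A → Prop
  | neg (φ : Fm A) : ISub φ (.neg φ)
  | andL (φ ψ : Fm A) : ISub φ (.and φ ψ)
  | andR (φ ψ : Fm A) : ISub ψ (.and φ ψ)
  | box (a : A) (φ : Fm A) : ISub φ (.box a φ)

/-- An occurrence type of φ: a nonempty sequence of formulas, each an immediate
subformula of the next, ending in φ. -/
def IsOcc {A : Type} (l : List (Fm A)) (φ : Fm A) : Prop :=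
  l ≠ [] ∧ l.getLast? = some φ ∧ List.Chain' ISub l

/-- A □_a-occurrence of φ. -/
def IsBoxOcc {A : Type} (a : A) (l : List (Fm A)) (φ : Fm A) : Prop :=
  IsOcc l φ ∧ ∃ β, l.head? = some (Fm.box a β)

/-- O ≤ O' iff O' is a suffix of O (prefix-extension order on occurrences). -/
def OccLe {A : Type} (O O' : List (Fm A)) : Prop := O' <:+ O

/-- φ is agent-alternating: between any two nested □_a-occurrences there is a
□_b-occurrence for some b ≠ a. -/
def AgentAlternating {A : Type} (φ : Fm A) : Prop :=
  ∀ (a : A) (O O' : List (Fm A)), IsBoxOcc a O φ → IsBoxOcc a O' φ → O ≠ O' → OccLe O O' →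
    ∃ b : A, b ≠ a ∧ ∃ O'' : List (Fm A), IsBoxOcc b O'' φ ∧ OccLe O O'' ∧ OccLe O'' O'

/-- φ is agent-nonrepeating: no □_a-occurrence lies below another □_a-occurrence. -/
def AgentNonrepeating {A : Type} (φ : Fm A) : Prop :=
  ∀ (a : A) (O O' : List (Fm A)), IsBoxOcc a O φ → IsBoxOcc a O' φ → O ≠ O' → ¬ OccLe O O'

/-- Boolean evaluation treating atoms and boxed formulas as atomic. -/
def evalP {A : Type} (v : Fm A → Bool) : Fm A → Bool
  | .neg φ => ! evalP v φ
  | .and φ ψ => evalP v φ && evalP v ψ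
  | φ => v φ

/-- Propositional tautologies (in the signature ¬, ∧, with boxed formulas atomic). -/
def Taut {A : Type} (φ : Fm A) : Prop := ∀ v : Fm A → Bool, evalP v φ = true

/-- Provability in the smallest normal modal logic containing the axioms `Ax`. -/
inductive Prv {A : Type} (Ax : Fm A → Prop) : Fm A → Prop
  | taut {φ : Fm A} : Taut φ → Prv Ax φ
  | ax {φ : Fm A} : Ax φ → Prv Ax φ
  | k (a : A) (φ ψ : Fm A) :
      Prv Ax (Fm.imp (.box a (Fm.imp φ ψ)) (Fm.imp (.box a φ) (.box a ψ)))
  | mp {φ ψ : Fm A} : Prv Ax (Fm.imp φ ψ) → Prv Ax φ → Prv Ax ψ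
  | nec {φ : Fm A} (a : A) : Prv Ax φ → Prv Ax (.box a φ)

def AxNone {A : Type} : Fm A → Prop := fun _ => False
def AxT {A : Type} : Fm A → Prop := fun χ => ∃ (a : A) (φ : Fm A), χ = Fm.imp (.box a φ) φ
def Ax4 {A : Type} : Fm A → Prop := fun χ => ∃ (a : A) (φ : Fm A), χ = Fm.imp (.box a φ) (.box a (.box a φ))
def Ax5 {A : Type} : Fm A → Prop := fun χ => ∃ (a : A) (φ : Fm A), χ = Fm.imp (.neg (.box a φ)) (.box a (.neg (.box a φ)))
def AxB {A : Type} : Fm A → Prop := fun χ => ∃ (a : A) (φ : Fm A), χ = Fm.imp φ (.box a (Fm.dia a φ))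
def AxD {A : Type} : Fm A → Prop := fun χ => ∃ (a : A) (φ : Fm A), χ = Fm.imp (.box a φ) (Fm.dia a φ)

def Ser {W : Type} (R : W → W → Prop) : Prop := ∀ u, ∃ v, R u v
def Eucl {W : Type} (R : W → W → Prop) : Prop := ∀ u v w, R u v → R u w → R v w

/-- Agent-alternating bisimulation family (`none` plays the role of `alt`). -/
def IsAAFamily {A W1 W2 : Type} (M : Kripke A W1) (N : Kripke A W2)
    (f : Option A → W1 → W2 → Prop) : Prop :=
  ∀ (o : Option A) (u : W1) (v : W2), f o u v →
    (∀ n, M.V n u ↔ N.V n v) ∧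
    (∀ b : A, o ≠ some b →
      (∀ u', M.R b u u' → ∃ v', N.R b v v' ∧ f (some b) u' v') ∧
      (∀ v', N.R b v v' → ∃ u', M.R b u u' ∧ f (some b) u' v'))

/-- Agent-nonrepeating bisimulation family. -/
def IsNRFamily {A W1 W2 : Type} (M : Kripke A W1) (N : Kripke A W2)
    (f : Set A → W1 → W2 → Prop) : Prop :=
  ∀ (X : Set A) (u : W1) (v : W2), f X u v →
    (∀ n, M.V n u ↔ N.V n v) ∧
    (∀ x ∈ X,
      (∀ u', M.R x u u' → ∃ v', N.R x v v' ∧ f (X \ {x}) u' v') ∧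
      (∀ v', N.R x v v' → ∃ u', M.R x u u' ∧ f (X \ {x}) u' v'))

/-- One step in an agent-alternating sequence. -/
def Step {A W : Type} (M : Kripke A W) : (Option A × W) → (Option A × W) → Prop :=
  fun x y => x.1 ≠ y.1 ∧ ∃ b : A, y.1 = some b ∧ M.R b x.2 y.2

/-- Valid worlds of an agent-alternating unraveling. -/
def ValidSeq {A W : Type} (M : Kripke A W) (s : List (Option A × W)) : Prop :=
  s ≠ [] ∧ (∃ w, s.head? = some (none, w)) ∧ (∀ x ∈ s.tail, x.1 ≠ none) ∧
    List.Chain' (Step M) s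

def UWorld {A W : Type} (M : Kripke A W) : Type := {s : List (Option A × W) // ValidSeq M s}

def lastEntry {A W : Type} {M : Kripke A W} (s : UWorld M) : Option A × W :=
  s.val.getLast s.prop.1

/-- N is an agent-alternating unraveling of M. -/
def IsAAUnraveling {A W : Type} (M : Kripke A W) (N : Kripke A (UWorld M)) : Prop :=
  (∀ (b : A) (s : UWorld M), (lastEntry s).1 ≠ some b →
    ∀ t : UWorld M, N.R b s t ↔ ∃ w', M.R b (lastEntry s).2 w' ∧ t.val = s.val ++ [(some b, w')])
  ∧ (∀ n (s : UWorld M), N.V n s ↔ M.V n (lastEntry s).2)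

/-- The canonical relation family between M and any of its agent-alternating unravelings. -/
def PFam {A W : Type} (M : Kripke A W) : Option A → W → UWorld M → Prop :=
  fun o u s => lastEntry s = (o, u)

/-- Finite agent-alternating bisimulation relations: `BisimN M N n (some a)` is ⇆_{-a}^n,
`BisimN M N n none` is ⇆_alt^n. -/
def BisimN {A W1 W2 : Type} (M : Kripke A W1) (N : Kripke A W2) :
    ℕ → Option A → W1 → W2 → Prop
  | 0, _, u, v => ∀ n, M.V n u ↔ N.V n v
  | (n+1), o, u, v => (∀ m, M.V m u ↔ N.V m v) ∧
      ∀ b : A, o ≠ some b →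
        (∀ u', M.R b u u' → ∃ v', N.R b v v' ∧ BisimN M N n (some b) u' v') ∧
        (∀ v', N.R b v v' → ∃ u', M.R b u u' ∧ BisimN M N n (some b) u' v')

/-- Standard n-bisimilarity. -/
def StdBisimN {A W1 W2 : Type} (M : Kripke A W1) (N : Kripke A W2) :
    ℕ → W1 → W2 → Prop
  | 0, u, v => ∀ n, M.V n u ↔ N.V n v
  | (n+1), u, v => (∀ m, M.V m u ↔ N.V m v) ∧
      ∀ b : A,
        (∀ u', M.R b u u' → ∃ v', N.R b v v' ∧ StdBisimN M N n u' v') ∧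
        (∀ v', N.R b v v' → ∃ u', M.R b u u' ∧ StdBisimN M N n u' v')


section Helpers
variable {A : Type} {Ax : Fm A → Prop}

lemma prv_trans {φ ψ χ : Fm A} (h1 : Prv Ax (Fm.imp φ ψ)) (h2 : Prv Ax (Fm.imp ψ χ)) :
    Prv Ax (Fm.imp φ χ) := by
  have t : Taut (Fm.imp (Fm.imp ψ χ) (Fm.imp (Fm.imp φ ψ) (Fm.imp φ χ))) := by
    intro v
    simp only [Fm.imp, evalP]
    cases evalP v φ <;> cases evalP v ψ <;> cases evalP v χ <;> rfl
  exact Prv.mp (Prv.mp (Prv.taut t) h2) h1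

lemma prv_contra {φ ψ : Fm A} (h : Prv Ax (Fm.imp φ ψ)) :
    Prv Ax (Fm.imp (.neg ψ) (.neg φ)) := by
  have t : Taut (Fm.imp (Fm.imp φ ψ) (Fm.imp (.neg ψ) (.neg φ))) := by
    intro v
    simp only [Fm.imp, evalP]
    cases evalP v φ <;> cases evalP v ψ <;> rfl
  exact Prv.mp (Prv.taut t) h

lemma prv_box_mono (a : A) {φ ψ : Fm A} (h : Prv Ax (Fm.imp φ ψ)) :
    Prv Ax (Fm.imp (.box a φ) (.box a ψ)) :=
  Prv.mp (Prv.k a φ ψ) (Prv.nec a h)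

lemma prv_dia_mono (a : A) {φ ψ : Fm A} (h : Prv Ax (Fm.imp φ ψ)) :
    Prv Ax (Fm.imp (Fm.dia a φ) (Fm.dia a ψ)) :=
  prv_contra (prv_box_mono a (prv_contra h))

lemma sat_imp {W : Type} (M : Kripke A W) (w : W) (φ ψ : Fm A) :
    Sat M w (Fm.imp φ ψ) ↔ (Sat M w φ → Sat M w ψ) := by
  simp only [Fm.imp, Sat]
  tauto

open Classical in
lemma evalP_sat {W : Type} (M : Kripke A W) (w : W) (φ : Fm A) :
    evalP (fun ψ => decide (Sat M w ψ)) φ = true ↔ Sat M w φ := by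
  induction φ with
  | atom n => simp [evalP]
  | neg φ ih =>
      simp only [evalP, Sat, Bool.not_eq_true', ← ih]
      simp
  | and φ ψ ih1 ih2 => simp [evalP, Sat, ih1, ih2]
  | box a φ ih => simp [evalP]

open Classical in
lemma soundness {W : Type} (M : Kripke A W) (hAx : ∀ φ, Ax φ → ∀ w, Sat M w φ)
    {φ : Fm A} (h : Prv Ax φ) : ∀ w, Sat M w φ := by
  induction h with
  | taut ht => intro w; exact (evalP_sat M w _).mp (ht _)
  | ax hφ => exact hAx _ hφ
  | k a φ ψ =>
      intro w
      rw [sat_imp, sat_imp]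
      intro h1 h2
      simp only [Sat] at *
      intro v hv
      by_contra hc
      exact h1 v hv ⟨h2 v hv, hc⟩
  | mp h1 h2 ih1 ih2 =>
      intro w
      exact (sat_imp M w _ _).mp (ih1 w) (ih2 w)
  | nec a h ih => intro w; intro v _; exact ih v

end Helpers

/-- ◇_a□_b□_a p → p is agent-alternating, a theorem of B = KTB, and not a theorem
of S4; hence B|_alt ⊄ S4|_alt. -/
theorem stmt5 {A : Type} (a b : A) (hab : a ≠ b) :
    LAlt (Fm.imp (Fm.dia a (.box b (.box a (.atom 0)))) (.atom 0)) ∧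
    Prv (fun χ => AxT χ ∨ AxB χ) (Fm.imp (Fm.dia a (.box b (.box a (.atom 0)))) (.atom 0)) ∧
    ¬ Prv (fun χ => AxT χ ∨ Ax4 χ) (Fm.imp (Fm.dia a (.box b (.box a (.atom 0)))) (.atom 0)) ∧
    ∃ φ : Fm A, LAlt φ ∧ Prv (fun χ => AxT χ ∨ AxB χ) φ ∧
      ¬ Prv (fun χ => AxT χ ∨ Ax4 χ) φ := by
  classical
  set p : Fm A := .atom 0 with hp
  have hAlt : LAlt (Fm.imp (Fm.dia a (.box b (.box a (.atom 0)))) (.atom 0)) := by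
    apply LAlt.neg
    apply LAlt.and
    · apply LAlt.neg
      exact LAlt.chi b (LMinus.box hab (LMinus.neg
        (LMinus.box hab.symm (LMinus.box hab (LMinus.atom a 0)))))
    · exact LAlt.neg (LAlt.atom 0)
  have hB : Prv (fun χ => AxT χ ∨ AxB χ)
      (Fm.imp (Fm.dia a (.box b (.box a (.atom 0)))) (.atom 0)) := by
    have h1 : Prv (fun χ => AxT χ ∨ AxB χ) (Fm.imp (.box b (.box a p)) (.box a p)) :=
      Prv.ax (Or.inl ⟨b, .box a p, rfl⟩)
    have h2 := prv_dia_mono (Ax := fun χ => AxT χ ∨ AxB χ) a h1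
    have h3 : Prv (fun χ => AxT χ ∨ AxB χ) (Fm.imp p (.neg (.neg p))) := by
      apply Prv.taut
      intro v
      simp only [Fm.imp, evalP, hp]
      cases v (Fm.atom 0) <;> rfl
    have h4 := prv_dia_mono (Ax := fun χ => AxT χ ∨ AxB χ) a (prv_box_mono a h3)
    have hBax : Prv (fun χ => AxT χ ∨ AxB χ)
        (Fm.imp (.neg p) (.box a (Fm.dia a (.neg p)))) :=
      Prv.ax (Or.inr ⟨a, .neg p, rfl⟩)
    have h5 : Prv (fun χ => AxT χ ∨ AxB χ)
        (Fm.imp (Fm.dia a (.box a (.neg (.neg p)))) (.neg (.neg p))) :=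
      prv_contra hBax
    have h6 : Prv (fun χ => AxT χ ∨ AxB χ) (Fm.imp (.neg (.neg p)) p) := by
      apply Prv.taut
      intro v
      simp only [Fm.imp, evalP, hp]
      cases v (Fm.atom 0) <;> rfl
    exact prv_trans h2 (prv_trans h4 (prv_trans h5 h6))
  have hNS4 : ¬ Prv (fun χ => AxT χ ∨ Ax4 χ)
      (Fm.imp (Fm.dia a (.box b (.box a (.atom 0)))) (.atom 0)) := by
    intro hprv
    set M : Kripke A Bool :=
      { R := fun x u v => if x = a then (u ≤ v) else u = v
        V := fun n w => w = true } with hM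
    have hRrefl : ∀ (x : A) (u : Bool), M.R x u u := by
      intro x u; simp only [hM]; split <;> simp
    have hRtrans : ∀ (x : A) (u v w : Bool), M.R x u v → M.R x v w → M.R x u w := by
      intro x u v w h1 h2
      simp only [hM] at h1 h2 ⊢
      by_cases hx : x = a
      · rw [if_pos hx] at h1 h2 ⊢; exact le_trans h1 h2
      · rw [if_neg hx] at h1 h2 ⊢; exact h1.trans h2
    have hAxValid : ∀ φ, (AxT φ ∨ Ax4 φ) → ∀ w, Sat M w φ := by
      rintro φ (⟨x, ψ, rfl⟩ | ⟨x, ψ, rfl⟩) w <;> rw [sat_imp] <;> intro h1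
      · exact h1 w (hRrefl x w)
      · intro v hv u hu
        exact h1 u (hRtrans x w v u hv hu)
    have hsat := soundness M hAxValid hprv false
    rw [sat_imp] at hsat
    have hfail : ¬ Sat M false (Fm.atom 0) := by simp [Sat, hM]
    apply hfail
    apply hsat
    simp only [Fm.dia, Sat]
    intro hall
    have h2 := hall true (by simp [hM])
    apply h2
    intro v hv u hu
    have hv' : v = true := by
      simp only [hM, if_neg hab.symm] at hv
      exact hv.symm
    subst hv'
    have hu' : u = true := by
      simp only [hM, eq_self_iff_true, if_true] at hu
      cases u
      · exact absurd hu (by simp)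
      · rfl
    exact hu'
  exact ⟨hAlt, hB, hNS4, _, hAlt, hB, hNS4⟩
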